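/- Let u = (u_n) be a T-sequence in a group G such that u generates G as a group. Let F be the free group on countably many generators e_1, e_2, …, equipped with the topology τ_e where e = (e_n) (the finest Hausdorff group topology on F in which e_n → identity). Then the homomorphism π : F → G determined by π(e_n) = u_n is a continuous surjective homomorphism from (F, τ_e) onto (G, τ_u), and (G, τ_u) is topologically isomorphic to the quotient group (F, τ_e)/ker π. -/

import Mathlib

open Filter Topology Pointwise

/-- `u` converges to the identity in the group topology `t`. -/
def TendstoOne {G : Type*} [Group G] (t : GroupTopology G) (u : ℕ → G) : Prop :=
  Filter.Tendsto u Filter.atTop (@nhds G t.toTopologicalSpace 1)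

/-- The group topology `t` is Hausdorff. -/
def IsHausdorffGT {G : Type*} [Group G] (t : GroupTopology G) : Prop :=
  @T2Space G t.toTopologicalSpace

/-- `S` is a `T_s`-set of sequences: some Hausdorff group topology makes every
sequence of `S` converge to the identity. -/
def IsTsSet {G : Type*} [Group G] (S : Set (ℕ → G)) : Prop :=
  ∃ t : GroupTopology G, IsHausdorffGT t ∧ ∀ u ∈ S, TendstoOne t u

/-- `τ` is the finest Hausdorff group topology on `G` in which every sequence of `S`
converges to the identity (recall that in Mathlib's order on topologies, finer = smaller). -/
def IsTauS {G : Type*} [Group G] (S : Set (ℕ → G)) (τ : GroupTopology G) : Prop :=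
  IsHausdorffGT τ ∧ (∀ u ∈ S, TendstoOne τ u) ∧
    ∀ t : GroupTopology G, IsHausdorffGT t → (∀ u ∈ S, TendstoOne t u) → τ ≤ t

/-- The given topological-group structure on `G`, as a term of `GroupTopology G`. -/
def ambientGT (G : Type*) [Group G] [τ : TopologicalSpace G] [h : IsTopologicalGroup G] :
    GroupTopology G := ⟨τ, h⟩

/-- The set of all sequences converging to the identity in a group topology. -/
def SeqConvOne {G : Type*} [Group G] (t : GroupTopology G) : Set (ℕ → G) :=
  {u | TendstoOne t u}

/-- `(G, τ)` is an `s`-group: its topology is the finest Hausdorff group topology in which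
every member of some `T_s`-set of sequences converges to the identity. -/
def IsSGroup (G : Type*) [Group G] [TopologicalSpace G] [IsTopologicalGroup G] [T2Space G] :
    Prop :=
  ∃ S : Set (ℕ → G), IsTauS S (ambientGT G)

/-- let `u` be a `T`-sequence generating a group `G`, with finest topology
`τ_u`, and let `τ_e` be the finest Hausdorff group topology on the free group `F = FreeGroup ℕ`
in which the sequence of generators `e n = FreeGroup.of n` converges to the identity.  Then
the homomorphism `π = FreeGroup.lift u : F → G` (so `π (e n) = u n`) is a continuous
surjection from `(F, τ_e)` onto `(G, τ_u)`, and `τ_u` is the quotient topology, i.e.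
`(G, τ_u)` is topologically isomorphic to `(F, τ_e) ⧸ ker π`. -/
theorem stmt17 {G : Type*} [Group G] (u : ℕ → G)
    (hgen : Subgroup.closure (Set.range u) = ⊤)
    (τu : GroupTopology G) (hτu : IsTauS {u} τu)
    (τe : GroupTopology (FreeGroup ℕ))
    (hτe : IsTauS {fun n => FreeGroup.of n} τe) :
    Function.Surjective (FreeGroup.lift u : FreeGroup ℕ →* G) ∧
      @Continuous (FreeGroup ℕ) G τe.toTopologicalSpace τu.toTopologicalSpace
        (FreeGroup.lift u) ∧
      τu.toTopologicalSpace =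
        TopologicalSpace.coinduced (FreeGroup.lift u) τe.toTopologicalSpace := by
  set π : FreeGroup ℕ →* G := FreeGroup.lift u with hπdef
  -- surjectivity
  have hsurj : Function.Surjective π := by
    rw [← MonoidHom.range_eq_top, FreeGroup.range_lift_eq_closure, hgen]
  -- the induced group topology on the free group
  letI tG : TopologicalSpace G := τu.toTopologicalSpace
  haveI : @IsTopologicalGroup G tG _ := τu.toIsTopologicalGroup
  let τind : GroupTopology (FreeGroup ℕ) :=
    ⟨TopologicalSpace.induced π tG, topologicalGroup_induced π⟩
  -- e_n → 1 in τind
  have htend_ind : TendstoOne τind (fun n => FreeGroup.of n) := by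
    unfold TendstoOne
    show Filter.Tendsto _ _ (@nhds _ (TopologicalSpace.induced π tG) 1)
    rw [nhds_induced]
    rw [Filter.tendsto_comap_iff]
    have h1 : π (1 : FreeGroup ℕ) = 1 := map_one π
    have : (π ∘ fun n => FreeGroup.of n) = u := by
      funext n; simp [hπdef]
    rw [this, h1]
    exact hτu.2.1 u rfl
  -- the inf of τe and τind
  have hle : τe ≤ τind := by
    have h := hτe.2.2 (τe ⊓ τind) ?_ ?_
    · exact le_trans h inf_le_right
    · exact t2Space_antitone
        (by rw [GroupTopology.toTopologicalSpace_inf]; exact inf_le_left) hτe.1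
    · intro v hv
      rw [Set.mem_singleton_iff] at hv
      subst hv
      unfold TendstoOne
      rw [GroupTopology.toTopologicalSpace_inf, _root_.nhds_inf (t₁ := τe.toTopologicalSpace), Filter.tendsto_inf]
      exact ⟨hτe.2.1 _ rfl, htend_ind⟩
  have hcont : @Continuous (FreeGroup ℕ) G τe.toTopologicalSpace tG π := by
    rw [continuous_iff_le_induced]
    exact GroupTopology.toTopologicalSpace_le.2 hle
  refine ⟨hsurj, hcont, ?_⟩
  -- the coinduced (quotient) topology is a group topology
  letI tF : TopologicalSpace (FreeGroup ℕ) := τe.toTopologicalSpace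
  haveI : @IsTopologicalGroup (FreeGroup ℕ) tF _ := τe.toIsTopologicalGroup
  letI tQ : TopologicalSpace (FreeGroup ℕ ⧸ π.ker) := instTopologicalSpaceQuotient
  haveI hTGQ : IsTopologicalGroup (FreeGroup ℕ ⧸ π.ker) := inferInstance
  let e : (FreeGroup ℕ ⧸ π.ker) ≃* G := QuotientGroup.quotientKerEquivOfSurjective π hsurj
  have hcoin : TopologicalSpace.coinduced π tF =
      TopologicalSpace.coinduced (⇑e) tQ := by
    have : tQ = TopologicalSpace.coinduced (QuotientGroup.mk (s := π.ker)) tF := rfl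
    rw [this, coinduced_compose]
    have hfun : (⇑e) ∘ (QuotientGroup.mk (s := π.ker)) = ⇑π := by
      funext x
      show QuotientGroup.quotientKerEquivOfSurjective π hsurj (QuotientGroup.mk x) = π x
      rfl
    rw [hfun]
  have hTGc : @IsTopologicalGroup G (TopologicalSpace.coinduced (⇑π) tF) _ := by
    have hcoe : (⇑e : (FreeGroup ℕ ⧸ π.ker) → G) = ⇑e.toEquiv := rfl
    have hcoes : (⇑e.symm : G → (FreeGroup ℕ ⧸ π.ker)) = ⇑e.toEquiv.symm := rfl
    have h2 : TopologicalSpace.coinduced (⇑e) tQ =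
        TopologicalSpace.induced (⇑e.symm) tQ := by
      rw [hcoe, hcoes, Equiv.induced_symm]
    rw [hcoin, h2]
    exact topologicalGroup_induced (e.symm : G →* (FreeGroup ℕ ⧸ π.ker))
  let τq : GroupTopology G := ⟨TopologicalSpace.coinduced π tF, hTGc⟩
  -- u → 1 in τq
  have htend_q : TendstoOne τq u := by
    unfold TendstoOne
    have hπc : @Continuous (FreeGroup ℕ) G tF
        (TopologicalSpace.coinduced (⇑π) tF) (⇑π) :=
      @continuous_coinduced_rng _ _ (⇑π) tF
    have h1 : π (1 : FreeGroup ℕ) = 1 := map_one π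
    have := (@Continuous.tendsto _ _ tF (TopologicalSpace.coinduced (⇑π) tF)
      (⇑π) hπc (1 : FreeGroup ℕ)).comp (hτe.2.1 _ rfl)
    rw [h1] at this
    convert this using 1
    funext n; simp [hπdef]
  -- τu ≤ τq via the inf of τu and τq
  have hle2 : τu ≤ τq := by
    have h := hτu.2.2 (τu ⊓ τq) ?_ ?_
    · exact le_trans h inf_le_right
    · exact t2Space_antitone
        (by rw [GroupTopology.toTopologicalSpace_inf]; exact inf_le_left) hτu.1
    · intro v hv
      rw [Set.mem_singleton_iff] at hv
      subst hv
      unfold TendstoOne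
      rw [GroupTopology.toTopologicalSpace_inf,
        @_root_.nhds_inf G τu.toTopologicalSpace τq.toTopologicalSpace 1,
        Filter.tendsto_inf]
      exact ⟨hτu.2.1 _ rfl, htend_q⟩
  exact le_antisymm (GroupTopology.toTopologicalSpace_le.2 hle2)
    (continuous_iff_coinduced_le.1 hcont)
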